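/- arXiv:1503.04068 — 2 statements merged into one kernel-verified Lean document; each statement's English description precedes it below -/
import Mathlib

section
/- Let G be a finitely generated torsion-free nilpotent group and H ≤ G a subgroup of finite index. If ξ, η ∈ Pol(G) (i.e. each belongs to Pol_d(G) for some d ∈ ℕ) and ξ and η agree on H, then ξ = η. (Polynomial maps on a discrete Mal'cev group are determined by their values on a finite-index subgroup; in the paper, by their values on the subgroup generated by the degree-one elements of a Mal'cev basis, which has finite index.) -/
open Finset Polynomial

/-- The left difference operator: `(∂_g ξ)(h) = ξ(g⁻¹h) - ξ(h)`. -/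
def lDiff {G : Type*} [Group G] (g : G) (ξ : G → ℝ) : G → ℝ :=
  fun h => ξ (g⁻¹ * h) - ξ h

/-- `ξ` is a polynomial map of degree at most `d`. -/
def IsPolyLe {G : Type*} [Group G] (d : ℕ) (ξ : G → ℝ) : Prop :=
  ∀ gs : List G, gs.length = d + 1 → gs.foldr lDiff ξ = 0

/-- A monoid is torsion-free if no nontrivial element has finite order (old Mathlib definition). -/
def Monoid.IsTorsionFree (G : Type*) [Monoid G] : Prop :=
  ∀ g : G, g ≠ 1 → ¬IsOfFinOrder g

lemma lDiff_zero {G : Type*} [Group G] (g : G) : lDiff g (0 : G → ℝ) = 0 := by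
  funext h; simp [lDiff]

lemma lDiff_sub {G : Type*} [Group G] (g : G) (f f' : G → ℝ) :
    lDiff g (f - f') = lDiff g f - lDiff g f' := by
  funext h; simp only [lDiff, Pi.sub_apply]; ring

lemma foldr_lDiff_sub {G : Type*} [Group G] (gs : List G) (f f' : G → ℝ) :
    gs.foldr lDiff (f - f') = gs.foldr lDiff f - gs.foldr lDiff f' := by
  induction gs with
  | nil => rfl
  | cons g l ih => simp [List.foldr_cons, ih, lDiff_sub]

lemma foldr_lDiff_zero {G : Type*} [Group G] (gs : List G) :
    gs.foldr lDiff (0 : G → ℝ) = 0 := by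
  induction gs with
  | nil => rfl
  | cons g l ih => simp [List.foldr_cons, ih, lDiff_zero]

lemma isPolyLe_mono {G : Type*} [Group G] {d d' : ℕ} (h : d ≤ d') {f : G → ℝ}
    (hf : IsPolyLe d f) : IsPolyLe d' f := by
  intro gs hgs
  have hlen : (gs.drop (d' - d)).length = d + 1 := by
    simp only [List.length_drop, hgs]; omega
  conv_lhs => rw [← List.take_append_drop (d' - d) gs]
  rw [List.foldr_append, hf _ hlen, foldr_lDiff_zero]

lemma fwdDiff_iter_zero (r : ℕ) : (fwdDiff (1:ℤ))^[r] (0 : ℤ → ℝ) = 0 := by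
  induction r with
  | zero => rfl
  | succ r ih =>
      rw [Function.iterate_succ_apply,
        show fwdDiff (1:ℤ) (0 : ℤ → ℝ) = 0 by funext k; simp [fwdDiff], ih]

/-- Key one-variable lemma: a discrete polynomial on `ℤ` vanishing on `nℤ` is zero. -/
lemma int_poly_vanish (F : ℤ → ℝ) (d : ℕ) (hF : (fwdDiff (1:ℤ))^[d+1] F = 0)
    (n : ℕ) (hn : 0 < n) (hz : ∀ k : ℤ, F (n * k) = 0) : ∀ m : ℤ, F m = 0 := by
  have hhigh : ∀ k : ℕ, d + 1 ≤ k → (fwdDiff (1:ℤ))^[k] F = 0 := by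
    intro k hk
    obtain ⟨r, rfl⟩ := Nat.exists_eq_add_of_le hk
    rw [add_comm, Function.iterate_add_apply, hF, fwdDiff_iter_zero]
  intro m
  set c : ℕ → ℝ := fun k => (fwdDiff (1:ℤ))^[k] F m with hc
  set p : ℝ[X] := ∑ k ∈ range (d+1), Polynomial.C (c k / k.factorial) * descPochhammer ℝ k
    with hp
  have heval : ∀ j : ℕ, p.eval (j : ℝ) = F (m + j) := by
    intro j
    have newton := shift_eq_sum_fwdDiff_iter (1:ℤ) F j m
    rw [show (j • (1:ℤ)) = (j : ℤ) by simp] at newton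
    rw [newton]
    have lhs : p.eval (j : ℝ) = ∑ k ∈ range (d+1), (j.choose k : ℝ) * c k := by
      rw [hp, eval_finset_sum]
      refine Finset.sum_congr rfl fun k _ => ?_
      rw [eval_mul, eval_C, descPochhammer_eval_eq_descFactorial,
        Nat.descFactorial_eq_factorial_mul_choose]
      have hfac : (k.factorial : ℝ) ≠ 0 := by positivity
      push_cast
      field_simp
    rw [lhs]
    have hsub : range (d+1) ⊆ range (d + 1 + (j+1)) := Finset.range_subset_range.2 (by omega)
    have hsub2 : range (j+1) ⊆ range (d + 1 + (j+1)) := Finset.range_subset_range.2 (by omega)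
    have h1 : ∑ k ∈ range (d+1), (j.choose k : ℝ) * c k
        = ∑ k ∈ range (d + 1 + (j+1)), (j.choose k : ℝ) * c k := by
      refine Finset.sum_subset hsub ?_
      intro k _ hk
      simp only [Finset.mem_range, not_lt] at hk
      have hck : c k = 0 := by
        rw [hc]; simp only; rw [hhigh k (by omega)]; rfl
      simp [hck]
    have h2 : ∑ k ∈ range (j+1), (j.choose k) • ((fwdDiff (1:ℤ))^[k] F m)
        = ∑ k ∈ range (d + 1 + (j+1)), (j.choose k : ℝ) * c k := by
      refine Eq.trans (Finset.sum_congr rfl fun k _ => by rw [nsmul_eq_mul])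
        (Finset.sum_subset hsub2 fun k _ hk => ?_)
      simp only [Finset.mem_range, not_lt] at hk
      have : j.choose k = 0 := Nat.choose_eq_zero_of_lt (by omega)
      simp [this]
    rw [h1, ← h2]
  -- an infinite family of roots of `p`
  set J : ℕ → ℤ := fun t => (n : ℤ) * (t + m.natAbs) - m with hJ
  have hn1 : (1 : ℤ) ≤ (n : ℤ) := by exact_mod_cast hn
  have hJnn : ∀ t : ℕ, 0 ≤ J t := by
    intro t
    have h1 : m ≤ (m.natAbs : ℤ) := Int.le_natAbs
    have h2 : (m.natAbs : ℤ) ≤ (n : ℤ) * (t + m.natAbs) := by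
      nlinarith [Int.natCast_nonneg t, Int.natCast_nonneg m.natAbs]
    simp only [hJ]; omega
  have hroot : ∀ t : ℕ, p.IsRoot (((J t).toNat : ℝ)) := by
    intro t
    have hcast : (((J t).toNat : ℤ)) = J t := Int.toNat_of_nonneg (hJnn t)
    rw [Polynomial.IsRoot, heval ((J t).toNat)]
    have : m + ((J t).toNat : ℤ) = (n : ℤ) * (t + m.natAbs) := by
      rw [hcast]; simp only [hJ]; ring
    rw [this]
    exact_mod_cast hz ((t : ℤ) + m.natAbs)
  have hinj : Function.Injective (fun t : ℕ => (((J t).toNat : ℝ))) := by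
    intro a b hab
    have h1 : (((J a).toNat : ℝ)) = (((J b).toNat : ℝ)) := hab
    have h2 : (J a).toNat = (J b).toNat := by exact_mod_cast h1
    have h3 : J a = J b := by
      rw [← Int.toNat_of_nonneg (hJnn a), ← Int.toNat_of_nonneg (hJnn b), h2]
    simp only [hJ] at h3
    have : (n : ℤ) * (a : ℤ) = (n : ℤ) * (b : ℤ) := by ring_nf at h3 ⊢; linarith
    have := mul_left_cancel₀ (by positivity : (n:ℤ) ≠ 0) this
    exact_mod_cast this
  have hp0 : p = 0 :=
    p.eq_zero_of_infinite_isRoot (Set.infinite_of_injective_forall_mem hinj hroot)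
  have := heval 0
  rw [hp0] at this
  simpa using this.symm

/-- Iterated left differences along powers of `x` give iterated forward differences. -/
lemma iter_fwdDiff_eq_foldr {G : Type*} [Group G] (x : G) :
    ∀ (r : ℕ) (φ : G → ℝ),
      (fwdDiff (1:ℤ))^[r] (fun k : ℤ => φ (x ^ (-k)))
        = fun k : ℤ => ((List.replicate r x).foldr lDiff φ) (x ^ (-k)) := by
  intro r
  induction r with
  | zero => intro φ; rfl
  | succ r ih =>
      intro φ
      rw [Function.iterate_succ_apply]
      have hstep : fwdDiff (1:ℤ) (fun k : ℤ => φ (x ^ (-k)))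
          = fun k : ℤ => (lDiff x φ) (x ^ (-k)) := by
        funext k
        simp only [fwdDiff, lDiff]
        congr 2
        rw [← zpow_neg_one, ← zpow_add]
        ring_nf
      rw [hstep, ih (lDiff x φ)]
      funext k
      rw [List.replicate_succ', List.foldr_append]
      rfl


/-- Polynomial maps on a finitely generated torsion-free nilpotent group are determined
by their values on a subgroup of finite index. -/
theorem stmt9 {G : Type*} [Group G] [Group.FG G] (hTF : Monoid.IsTorsionFree G)
    [Group.IsNilpotent G] (H : Subgroup G) (hH : H.FiniteIndex)
    (ξ η : G → ℝ) (hξ : ∃ d : ℕ, IsPolyLe d ξ) (hη : ∃ d : ℕ, IsPolyLe d η)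
    (hagree : ∀ h ∈ H, ξ h = η h) : ξ = η := by
  obtain ⟨d₁, hξ⟩ := hξ
  obtain ⟨d₂, hη⟩ := hη
  set d := max d₁ d₂ with hd
  set φ : G → ℝ := ξ - η with hφ
  have hpoly : IsPolyLe d φ := by
    intro gs hgs
    rw [hφ, foldr_lDiff_sub, isPolyLe_mono (le_max_left d₁ d₂) hξ gs hgs,
      isPolyLe_mono (le_max_right d₁ d₂) hη gs hgs, sub_zero]
  have hφH : ∀ h ∈ H, φ h = 0 := by
    intro h hh
    simp [hφ, hagree h hh]
  have hzero : ∀ x : G, φ x = 0 := by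
    intro x
    obtain ⟨n, hn0, _, hxn⟩ := Subgroup.exists_pow_mem_of_index_ne_zero hH.index_ne_zero x
    set F : ℤ → ℝ := fun k : ℤ => φ (x ^ (-k)) with hF
    have hFd : (fwdDiff (1:ℤ))^[d+1] F = 0 := by
      rw [hF, iter_fwdDiff_eq_foldr x (d+1) φ,
        hpoly (List.replicate (d+1) x) List.length_replicate]
      rfl
    have hFz : ∀ k : ℤ, F ((n : ℤ) * k) = 0 := by
      intro k
      apply hφH
      have : x ^ (-((n:ℤ) * k)) = (x ^ n) ^ (-k) := by
        rw [← zpow_natCast x n, ← zpow_mul]; ring_nf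
      rw [this]
      exact Subgroup.zpow_mem H hxn (-k)
    have := int_poly_vanish F d hFd n hn0 hFz (-1)
    simpa [hF] using this
  funext x
  have := hzero x
  simp only [hφ, Pi.sub_apply] at this
  linarith
end

section
/- Let G be a finitely generated torsion-free nilpotent group and d ∈ ℕ. Then Pol_d(G) is a finite-dimensional ℝ-linear subspace of the space of all functions G → ℝ. -/
namespace PolAux

variable {G : Type*} [Group G]

lemma lDiff_add (g : G) (ξ η : G → ℝ) : lDiff g (ξ + η) = lDiff g ξ + lDiff g η := by
  funext h; simp [lDiff]; ring

lemma lDiff_smul (g : G) (c : ℝ) (ξ : G → ℝ) : lDiff g (c • ξ) = c • lDiff g ξ := by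
  funext h; simp [lDiff]; ring

lemma lDiff_zero (g : G) : lDiff g (0 : G → ℝ) = 0 := by
  funext h; simp [lDiff]

lemma foldr_add (gs : List G) (ξ η : G → ℝ) :
    gs.foldr lDiff (ξ + η) = gs.foldr lDiff ξ + gs.foldr lDiff η := by
  induction gs with
  | nil => rfl
  | cons g gs ih => simp [List.foldr, ih, lDiff_add]

lemma foldr_smul (gs : List G) (c : ℝ) (ξ : G → ℝ) :
    gs.foldr lDiff (c • ξ) = c • gs.foldr lDiff ξ := by
  induction gs with
  | nil => rfl
  | cons g gs ih => simp [List.foldr, ih, lDiff_smul]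

lemma foldr_zero (gs : List G) : gs.foldr lDiff (0 : G → ℝ) = 0 := by
  induction gs with
  | nil => rfl
  | cons g gs ih => simp [List.foldr, ih, lDiff_zero]

/-- `Pol_d(G)` as a submodule. -/
def Pol (G : Type*) [Group G] (d : ℕ) : Submodule ℝ (G → ℝ) where
  carrier := {ξ | IsPolyLe d ξ}
  add_mem' := fun ha hb gs hgs => by
    rw [foldr_add, ha gs hgs, hb gs hgs, add_zero]
  zero_mem' := fun gs _ => foldr_zero gs
  smul_mem' := fun c ξ hξ gs hgs => by
    rw [foldr_smul, hξ gs hgs, smul_zero]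

/-- The set of `g` with `∂_g ξ = 0` is a subgroup. -/
def annih (ξ : G → ℝ) : Subgroup G where
  carrier := {g | lDiff g ξ = 0}
  one_mem' := by funext h; simp [lDiff]
  mul_mem' := by
    intro a b ha hb
    funext h
    have h1 := congrFun hb (a⁻¹ * h)
    have h2 := congrFun ha h
    simp only [lDiff, Pi.zero_apply] at h1 h2 ⊢
    rw [mul_inv_rev, mul_assoc]
    linarith
  inv_mem' := by
    intro a ha
    funext h
    have h1 := congrFun ha (a * h)
    simp only [lDiff, Pi.zero_apply, inv_inv, inv_mul_cancel_left] at h1 ⊢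
    linarith

lemma eq_const_of_annih_top (ξ : G → ℝ) (h : annih ξ = ⊤) (x : G) : ξ x = ξ 1 := by
  have hx : x⁻¹ ∈ annih ξ := by rw [h]; trivial
  have := congrFun hx 1
  simp only [lDiff, Pi.zero_apply, inv_inv, mul_one] at this
  linarith

lemma isPolyLe_zero_iff (ξ : G → ℝ) : IsPolyLe 0 ξ ↔ ∀ g : G, lDiff g ξ = 0 := by
  constructor
  · intro h g; exact h [g] rfl
  · intro h gs hgs
    match gs, hgs with
    | [g], _ => exact h g

lemma lDiff_mem_pol {d : ℕ} (ξ : G → ℝ) (hξ : ξ ∈ Pol G (d + 1)) (s : G) :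
    lDiff s ξ ∈ Pol G d := by
  intro gs hgs
  have : gs.foldr lDiff (lDiff s ξ) = (gs ++ [s]).foldr lDiff ξ := by
    rw [List.foldr_append]; rfl
  rw [this]
  exact hξ (gs ++ [s]) (by simp [hgs])

lemma finiteDimensional_pol (G : Type*) [Group G] [Group.FG G] (d : ℕ) :
    FiniteDimensional ℝ (Pol G d) := by
  induction d with
  | zero =>
    have hle : Pol G 0 ≤ Submodule.span ℝ {(fun _ => (1 : ℝ) : G → ℝ)} := by
      intro ξ hξ
      have hc : ∀ x : G, ξ x = ξ 1 := by
        intro x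
        apply eq_const_of_annih_top
        rw [eq_top_iff]
        intro g _
        exact ((isPolyLe_zero_iff ξ).mp hξ) g
      have : ξ = (ξ 1) • (fun _ => (1 : ℝ) : G → ℝ) := by
        funext x; simp [hc x]
      rw [this]
      exact Submodule.smul_mem _ _ (Submodule.mem_span_singleton_self _)
    exact Submodule.finiteDimensional_of_le hle
  | succ d ih =>
    obtain ⟨S, hS⟩ := Group.FG.out (G := G)
    -- linear map into (S → Pol G d) × ℝ
    let Φ : Pol G (d + 1) →ₗ[ℝ] (S → Pol G d) × ℝ :=
      { toFun := fun ξ => (fun s => ⟨lDiff s.1 ξ.1, lDiff_mem_pol ξ.1 ξ.2 s.1⟩, ξ.1 1)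
        map_add' := fun ξ η => by
          ext s <;> simp [lDiff_add]
        map_smul' := fun c ξ => by
          ext s <;> simp [lDiff_smul] }
    have hinj : Function.Injective Φ := by
      rw [← LinearMap.ker_eq_bot, eq_bot_iff]
      intro ξ hξ
      simp only [LinearMap.mem_ker, Prod.ext_iff, funext_iff] at hξ
      obtain ⟨h1, h2⟩ := hξ
      have hannih : annih ξ.1 = ⊤ := by
        rw [eq_top_iff, ← hS, Subgroup.closure_le]
        intro s hs
        have := h1 ⟨s, hs⟩
        show lDiff s ξ.1 = 0
        exact Subtype.ext_iff.mp this
      have hconst : ∀ x : G, ξ.1 x = ξ.1 1 := eq_const_of_annih_top ξ.1 hannih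
      have : ξ.1 = 0 := by
        funext x
        rw [Pi.zero_apply, hconst x]
        exact h2
      exact (Submodule.mem_bot ℝ).mpr (Subtype.ext this)
    haveI := ih
    exact FiniteDimensional.of_injective Φ hinj

end PolAux

/-- For a finitely generated torsion-free nilpotent group `G`, `Pol_d(G)` is a
finite-dimensional `ℝ`-linear subspace of the space of all functions `G → ℝ`. -/
theorem stmt13 {G : Type*} [Group G] [Group.FG G] (hTF : Monoid.IsTorsionFree G)
    [Group.IsNilpotent G] (d : ℕ) :
    ∃ S : Submodule ℝ (G → ℝ), (S : Set (G → ℝ)) = {ξ : G → ℝ | IsPolyLe d ξ} ∧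
      FiniteDimensional ℝ S := by
  exact ⟨PolAux.Pol G d, rfl, PolAux.finiteDimensional_pol G d⟩
end
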